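/- For a > 0, b > 0 and c > 0, ∫₀^∞ z^{a-1} ln(z) / (1 + z/c)^{a+b} dz = c^a · B(b, a) · (ψ(a) − ψ(b) + ln c). -/

import Mathlib

open MeasureTheory ProbabilityTheory Real Filter Asymptotics

/-- Beta function `B(a,b) = Γ(a)Γ(b)/Γ(a+b)`. -/
noncomputable def Beta (a b : ℝ) : ℝ := Real.Gamma a * Real.Gamma b / Real.Gamma (a + b)

/-- Pochhammer symbol `(a)_n`. -/
noncomputable def poch (a : ℝ) (n : ℕ) : ℝ := (ascPochhammer ℝ n).eval a

/-- Gauss hypergeometric function `₂F₁` (series definition). -/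
noncomputable def hyp2F1 (a b c x : ℝ) : ℝ :=
  ∑' n : ℕ, poch a n * poch b n / (poch c n * (n.factorial : ℝ)) * x ^ n

/-- Generalized hypergeometric function `₃F₂` (series definition). -/
noncomputable def hyp3F2 (a1 a2 a3 b1 b2 x : ℝ) : ℝ :=
  ∑' n : ℕ, poch a1 n * poch a2 n * poch a3 n /
    (poch b1 n * poch b2 n * (n.factorial : ℝ)) * x ^ n

/-- Appell two-variable hypergeometric function `F₁` (series definition). -/
noncomputable def appellF1 (a b1 b2 c x y : ℝ) : ℝ :=
  ∑' p : ℕ × ℕ, poch a (p.1 + p.2) * poch b1 p.1 * poch b2 p.2 /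
    (poch c (p.1 + p.2) * (p.1.factorial : ℝ) * (p.2.factorial : ℝ)) * x ^ p.1 * y ^ p.2

/-- Digamma function `ψ = Γ'/Γ`. -/
noncomputable def digamma (x : ℝ) : ℝ := deriv Real.Gamma x / Real.Gamma x

/-- Fisher-Snedecor `𝓕` composite fading PDF with multipath parameter `m`,
shadowing parameter `ms` and mean power `γbar`. -/
noncomputable def fisherPDF (m ms γbar x : ℝ) : ℝ :=
  if 0 < x then
    m ^ m * (ms - 1) ^ ms * γbar ^ ms * x ^ (m - 1) /
      (Beta m ms * (m * x + (ms - 1) * γbar) ^ (m + ms))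
  else 0

/-- Unit-scale Fisher-Snedecor `𝓕` PDF `Λ^m t^(m-1)/(B(m,ms)(1+Λt)^(m+ms))`. -/
noncomputable def fisherPDFΛ (m ms Λ t : ℝ) : ℝ :=
  if 0 < t then Λ ^ m * t ^ (m - 1) / (Beta m ms * (1 + Λ * t) ^ (m + ms)) else 0


open Set in
private lemma pt_eq_J13 {a b x : ℝ} (hx0 : 0 < x) (hx1 : x ≤ 1) :
    (x:ℂ) ^ ((a:ℂ) - 1) * (1 - (x:ℂ)) ^ ((b:ℂ) - 1)
      = ((x ^ (a-1) * (1-x) ^ (b-1) : ℝ) : ℂ) := by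
  have h1 : ((a:ℂ) - 1) = ((a - 1 : ℝ) : ℂ) := by push_cast; ring
  have h2 : ((b:ℂ) - 1) = ((b - 1 : ℝ) : ℂ) := by push_cast; ring
  have h3 : (1 - (x:ℂ)) = ((1 - x : ℝ) : ℂ) := by push_cast; ring
  rw [h1, h2, h3, ← Complex.ofReal_cpow hx0.le, ← Complex.ofReal_cpow (by linarith),
    ← Complex.ofReal_mul]

open Set in
private lemma betaIntegrableOn_J13 {a b : ℝ} (ha : 0 < a) (hb : 0 < b) :
    IntegrableOn (fun x => x ^ (a-1) * (1-x) ^ (b-1)) (Set.Ioo (0:ℝ) 1) := by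
  have h := (Complex.betaIntegral_convergent (u := (a:ℂ)) (v := (b:ℂ))
    (by simpa using ha) (by simpa using hb))
  rw [intervalIntegrable_iff_integrableOn_Ioc_of_le zero_le_one] at h
  have h2 : IntegrableOn (fun x : ℝ => (x:ℂ) ^ ((a:ℂ) - 1) * (1 - (x:ℂ)) ^ ((b:ℂ) - 1))
      (Set.Ioo (0:ℝ) 1) := h.mono_set Ioo_subset_Ioc_self
  have h3 : IntegrableOn (fun x : ℝ =>
      Complex.re ((x:ℂ) ^ ((a:ℂ) - 1) * (1 - (x:ℂ)) ^ ((b:ℂ) - 1))) (Set.Ioo (0:ℝ) 1) := h2.re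
  refine h3.congr_fun (fun x hx => ?_) measurableSet_Ioo
  dsimp only
  rw [pt_eq_J13 hx.1 hx.2.le, Complex.ofReal_re]

open Set in
private lemma betaReal_J13 {a b : ℝ} (ha : 0 < a) (hb : 0 < b) :
    ∫ x in Set.Ioo (0:ℝ) 1, x ^ (a-1) * (1-x) ^ (b-1) = Beta a b := by
  have key := Complex.Gamma_mul_Gamma_eq_betaIntegral (s := (a:ℂ)) (t := (b:ℂ))
    (by simpa using ha) (by simpa using hb)
  have hbeta : Complex.betaIntegral a b
      = ((∫ x in Set.Ioo (0:ℝ) 1, x ^ (a-1) * (1-x) ^ (b-1) : ℝ) : ℂ) := by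
    rw [Complex.betaIntegral, intervalIntegral.integral_of_le zero_le_one,
      ← integral_Ioc_eq_integral_Ioo (f := fun x : ℝ => x ^ (a-1) * (1-x) ^ (b-1))]
    have hco : (∫ x in Set.Ioc (0:ℝ) 1, ((x ^ (a-1) * (1-x) ^ (b-1) : ℝ) : ℂ))
        = ((∫ x in Set.Ioc (0:ℝ) 1, x ^ (a-1) * (1-x) ^ (b-1) : ℝ) : ℂ) := integral_ofReal
    rw [← hco]
    refine setIntegral_congr_ae measurableSet_Ioc ?_
    filter_upwards [] with x
    intro hx
    exact pt_eq_J13 hx.1 hx.2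
  rw [hbeta, ← Complex.ofReal_add, Complex.Gamma_ofReal, Complex.Gamma_ofReal,
    Complex.Gamma_ofReal, ← Complex.ofReal_mul, ← Complex.ofReal_mul] at key
  have key2 := Complex.ofReal_injective key
  have hne : Real.Gamma (a + b) ≠ 0 := (Real.Gamma_pos_of_pos (by linarith)).ne'
  rw [Beta, eq_div_iff hne]
  linear_combination -key2

private lemma neg_log_le_J13 {x δ : ℝ} (hx : 0 < x) (hδ : 0 < δ) :
    -Real.log x ≤ x ^ (-δ) / δ := by
  have h := Real.log_le_sub_one_of_pos (Real.rpow_pos_of_pos hx (-δ))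
  rw [Real.log_rpow hx] at h
  have hle : -δ * Real.log x ≤ x ^ (-δ) := by linarith
  rw [le_div_iff₀ hδ]
  nlinarith

open Set in
private lemma aesm_abslog_J13 {p q : ℝ} : AEStronglyMeasurable
    (fun x : ℝ => x ^ p * (1-x) ^ q * |Real.log x|) (volume.restrict (Set.Ioo (0:ℝ) 1)) := by
  refine ContinuousOn.aestronglyMeasurable ?_ measurableSet_Ioo
  intro x hx
  refine ContinuousWithinAt.mul (ContinuousWithinAt.mul ?_ ?_) ?_
  · exact (Real.continuousAt_rpow_const x p (Or.inl hx.1.ne')).continuousWithinAt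
  · exact (ContinuousAt.comp (Real.continuousAt_rpow_const (1-x) q
      (Or.inl (by have := hx.2; intro h; rw [sub_eq_zero] at h; linarith)))
      (continuous_const.sub continuous_id).continuousAt).continuousWithinAt
  · exact ((Real.continuousAt_log hx.1.ne').abs).continuousWithinAt

open Set in
private lemma betaLogIntegrableOn_J13 {a b : ℝ} (ha : 0 < a) (hb : 0 < b) :
    IntegrableOn (fun x => x ^ (a-1) * (1-x) ^ (b-1) * |Real.log x|) (Set.Ioo (0:ℝ) 1) := by
  have hint : IntegrableOn (fun x => (2/a) * (x ^ (a/2-1) * (1-x) ^ (b-1))) (Set.Ioo (0:ℝ) 1) :=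
    (betaIntegrableOn_J13 (by linarith) hb).const_mul _
  refine hint.mono' aesm_abslog_J13 ?_
  filter_upwards [ae_restrict_mem measurableSet_Ioo] with x hx
  have hx0 := hx.1; have hx1 := hx.2
  have hlog : |Real.log x| = -Real.log x := by
    rw [abs_of_nonpos (Real.log_nonpos hx0.le hx1.le)]
  have hb1 : (0:ℝ) ≤ (1-x) ^ (b-1) := Real.rpow_nonneg (by linarith) _
  have ha1 : (0:ℝ) ≤ x ^ (a-1) := Real.rpow_nonneg hx0.le _
  rw [Real.norm_eq_abs, abs_of_nonneg (by positivity), hlog]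
  have h1 : -Real.log x ≤ x ^ (-(a/2)) / (a/2) := neg_log_le_J13 hx0 (by linarith)
  have h2 : x ^ (a-1) * (-Real.log x) ≤ x ^ (a-1) * (x ^ (-(a/2)) / (a/2)) :=
    mul_le_mul_of_nonneg_left h1 ha1
  have h3 : x ^ (a-1) * x ^ (-(a/2)) = x ^ (a/2-1) := by
    rw [← Real.rpow_add hx0]; ring_nf
  calc x ^ (a-1) * (1-x) ^ (b-1) * (-Real.log x)
      = (x ^ (a-1) * (-Real.log x)) * (1-x) ^ (b-1) := by ring
    _ ≤ (x ^ (a-1) * (x ^ (-(a/2)) / (a/2))) * (1-x) ^ (b-1) :=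
        mul_le_mul_of_nonneg_right h2 hb1
    _ = (2/a) * (x ^ (a/2-1) * (1-x) ^ (b-1)) := by
        rw [← h3]; field_simp

private lemma gamma_hasDerivAt_J13 {a : ℝ} (ha : 0 < a) :
    HasDerivAt Real.Gamma (deriv Real.Gamma a) a :=
  (Real.differentiableAt_Gamma
    (fun m => ((neg_nonpos.mpr (Nat.cast_nonneg m)).trans_lt ha).ne')).hasDerivAt

private lemma beta_hasDerivAt_J13 {a b : ℝ} (ha : 0 < a) (hb : 0 < b) :
    HasDerivAt (fun s => Beta s b) (Beta a b * (digamma a - digamma (a+b))) a := by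
  have hGb : (0:ℝ) < Real.Gamma (a+b) := Real.Gamma_pos_of_pos (by linarith)
  have hGa : (0:ℝ) < Real.Gamma a := Real.Gamma_pos_of_pos ha
  have h2 : HasDerivAt (fun s => Real.Gamma (s+b)) (deriv Real.Gamma (a+b)) a := by
    have := (gamma_hasDerivAt_J13 (by linarith : (0:ℝ) < a+b)).comp a
      ((hasDerivAt_id a).add_const b)
    simpa [Function.comp_def] using this
  have h := ((gamma_hasDerivAt_J13 ha).mul_const (Real.Gamma b)).div h2 hGb.ne'
  refine h.congr_deriv ?_
  unfold Beta digamma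
  field_simp

open Set in
private lemma aesm_log_J13 {p q : ℝ} : AEStronglyMeasurable
    (fun x : ℝ => x ^ p * Real.log x * (1-x) ^ q) (volume.restrict (Set.Ioo (0:ℝ) 1)) := by
  refine ContinuousOn.aestronglyMeasurable ?_ measurableSet_Ioo
  intro x hx
  refine ContinuousWithinAt.mul (ContinuousWithinAt.mul ?_ ?_) ?_
  · exact (Real.continuousAt_rpow_const x p (Or.inl hx.1.ne')).continuousWithinAt
  · exact (Real.continuousAt_log hx.1.ne').continuousWithinAt
  · exact (ContinuousAt.comp (Real.continuousAt_rpow_const (1-x) q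
      (Or.inl (by have := hx.2; intro h; rw [sub_eq_zero] at h; linarith)))
      (continuous_const.sub continuous_id).continuousAt).continuousWithinAt

open Set in
private lemma aesm_plain_J13 {p q : ℝ} : AEStronglyMeasurable
    (fun x : ℝ => x ^ p * (1-x) ^ q) (volume.restrict (Set.Ioo (0:ℝ) 1)) := by
  refine ContinuousOn.aestronglyMeasurable ?_ measurableSet_Ioo
  intro x hx
  refine ContinuousWithinAt.mul ?_ ?_
  · exact (Real.continuousAt_rpow_const x p (Or.inl hx.1.ne')).continuousWithinAt
  · exact (ContinuousAt.comp (Real.continuousAt_rpow_const (1-x) q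
      (Or.inl (by have := hx.2; intro h; rw [sub_eq_zero] at h; linarith)))
      (continuous_const.sub continuous_id).continuousAt).continuousWithinAt

open Set in
private lemma I1_J13 {a b : ℝ} (ha : 0 < a) (hb : 0 < b) :
    ∫ x in Set.Ioo (0:ℝ) 1, x ^ (a-1) * Real.log x * (1-x) ^ (b-1)
      = Beta a b * (digamma a - digamma (a+b)) := by
  set μ := volume.restrict (Set.Ioo (0:ℝ) 1)
  set F : ℝ → ℝ → ℝ := fun s x => x ^ (s-1) * (1-x) ^ (b-1) with hF
  set F' : ℝ → ℝ → ℝ := fun s x => x ^ (s-1) * Real.log x * (1-x) ^ (b-1) with hF'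
  set bound : ℝ → ℝ := fun x => x ^ (a/2-1) * (1-x) ^ (b-1) * |Real.log x| with hbound
  have hmain : Integrable (F' a) μ ∧
      HasDerivAt (fun s => ∫ x, F s x ∂μ) (∫ x, F' a x ∂μ) a := by
    apply hasDerivAt_integral_of_dominated_loc_of_deriv_le (bound := bound)
      (Metric.ball_mem_nhds a (half_pos ha))
    · filter_upwards [] with s; exact aesm_plain_J13
    · exact betaIntegrableOn_J13 ha hb
    · exact aesm_log_J13
    · filter_upwards [ae_restrict_mem measurableSet_Ioo] with x hx s hs
      have hx0 := hx.1; have hx1 := hx.2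
      rw [Metric.mem_ball, Real.dist_eq, abs_lt] at hs
      have hs2 : a/2 - 1 ≤ s - 1 := by linarith [hs.1]
      have hxp : x ^ (s-1) ≤ x ^ (a/2-1) :=
        Real.rpow_le_rpow_of_exponent_ge hx0 hx1.le hs2
      have h1 : (0:ℝ) ≤ (1-x) ^ (b-1) := Real.rpow_nonneg (by linarith) _
      rw [hF', hbound, Real.norm_eq_abs, abs_mul, abs_mul,
        abs_of_nonneg (Real.rpow_nonneg hx0.le _), abs_of_nonneg h1]
      calc x ^ (s-1) * |Real.log x| * (1-x) ^ (b-1)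
          ≤ x ^ (a/2-1) * |Real.log x| * (1-x) ^ (b-1) := by
            apply mul_le_mul_of_nonneg_right _ h1
            exact mul_le_mul_of_nonneg_right hxp (abs_nonneg _)
        _ = x ^ (a/2-1) * (1-x) ^ (b-1) * |Real.log x| := by ring
    · have := betaLogIntegrableOn_J13 (half_pos ha) hb
      exact this.congr_fun (fun x hx => by rw [hbound]) measurableSet_Ioo
    · filter_upwards [ae_restrict_mem measurableSet_Ioo] with x hx s hs
      have hd : HasDerivAt (fun s : ℝ => x ^ (s-1)) (x ^ (s-1) * Real.log x) s := by
        have := (Real.hasStrictDerivAt_const_rpow hx.1 (s-1)).hasDerivAt.comp s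
          ((hasDerivAt_id s).sub_const 1)
        simpa [Function.comp_def] using this
      have := hd.mul_const ((1-x) ^ (b-1))
      exact this
  have heq : (fun s => ∫ x, F s x ∂μ) =ᶠ[nhds a] (fun s => Beta s b) := by
    filter_upwards [eventually_gt_nhds ha] with s hs
    exact betaReal_J13 hs hb
  have hD : HasDerivAt (fun s => Beta s b) (∫ x, F' a x ∂μ) a :=
    hmain.2.congr_of_eventuallyEq heq.symm
  have := (beta_hasDerivAt_J13 ha hb).unique hD
  rw [← this]

open Set in
private lemma reflect_integral_J13 (g : ℝ → ℝ) :
    ∫ x in Set.Ioo (0:ℝ) 1, g x = ∫ x in Set.Ioo (0:ℝ) 1, g (1-x) := by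
  have himg : (fun x : ℝ => 1 - x) '' Set.Ioo (0:ℝ) 1 = Set.Ioo (0:ℝ) 1 := by
    rw [Set.image_const_sub_Ioo]; norm_num
  have h := integral_image_eq_integral_abs_deriv_smul (f := fun x : ℝ => 1 - x)
    (f' := fun _ => (-1 : ℝ)) (s := Set.Ioo (0:ℝ) 1) measurableSet_Ioo
    (fun x _ => ((hasDerivAt_id x).const_sub 1).hasDerivWithinAt)
    (fun x _ y _ h => by dsimp at h; linarith) g
  rw [himg] at h
  simpa using h

open Set in
private lemma reflect_integrableOn_J13 (g : ℝ → ℝ) :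
    IntegrableOn g (Set.Ioo (0:ℝ) 1) ↔ IntegrableOn (fun x => g (1-x)) (Set.Ioo (0:ℝ) 1) := by
  have himg : (fun x : ℝ => 1 - x) '' Set.Ioo (0:ℝ) 1 = Set.Ioo (0:ℝ) 1 := by
    rw [Set.image_const_sub_Ioo]; norm_num
  have h := integrableOn_image_iff_integrableOn_abs_deriv_smul (f := fun x : ℝ => 1 - x)
    (f' := fun _ => (-1 : ℝ)) (s := Set.Ioo (0:ℝ) 1) measurableSet_Ioo
    (fun x _ => ((hasDerivAt_id x).const_sub 1).hasDerivWithinAt)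
    (fun x _ y _ h => by dsimp at h; linarith) g
  rw [himg] at h
  simpa using h

private noncomputable def phiJ13 (x : ℝ) : ℝ := x / (1 - x)

open Set in
private lemma phiJ13_image : phiJ13 '' Set.Ioo (0:ℝ) 1 = Set.Ioi (0:ℝ) := by
  ext z
  constructor
  · rintro ⟨x, hx, rfl⟩
    exact div_pos hx.1 (by linarith [hx.2])
  · intro hz
    refine ⟨z / (1 + z), ⟨div_pos hz (by linarith [Set.mem_Ioi.mp hz]), ?_⟩, ?_⟩
    · rw [div_lt_one (by linarith [Set.mem_Ioi.mp hz])]; linarith [Set.mem_Ioi.mp hz]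
    · have h1 : (1:ℝ) + z ≠ 0 := by have := Set.mem_Ioi.mp hz; positivity
      unfold phiJ13
      have h2 : 1 - z/(1+z) = 1/(1+z) := by field_simp; ring
      rw [h2]
      field_simp

open Set in
private lemma phiJ13_deriv {x : ℝ} (hx : x ∈ Set.Ioo (0:ℝ) 1) :
    HasDerivWithinAt phiJ13 (((1-x)^2)⁻¹) (Set.Ioo (0:ℝ) 1) x := by
  have hne : (1:ℝ) - x ≠ 0 := by have := hx.2; intro h; rw [sub_eq_zero] at h; linarith
  have h := (hasDerivAt_id x).div ((hasDerivAt_id x).const_sub 1) hne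
  have heq : (1 * (1 - x) - x * -1) / (1 - x) ^ 2 = ((1-x)^2)⁻¹ := by
    field_simp
    ring
  simp only [id_eq] at h
  rw [heq] at h
  exact h.hasDerivWithinAt

open Set in
private lemma phiJ13_inj : Set.InjOn phiJ13 (Set.Ioo (0:ℝ) 1) := by
  intro x hx y hy h
  unfold phiJ13 at h
  have hnx : (1:ℝ) - x ≠ 0 := by have := hx.2; intro h'; rw [sub_eq_zero] at h'; linarith
  have hny : (1:ℝ) - y ≠ 0 := by have := hy.2; intro h'; rw [sub_eq_zero] at h'; linarith
  rw [div_eq_div_iff hnx hny] at h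
  nlinarith [h]

open Set in
private lemma phiJ13_transfer (g : ℝ → ℝ) :
    ∫ z in Set.Ioi (0:ℝ), g z = ∫ x in Set.Ioo (0:ℝ) 1, ((1-x)^2)⁻¹ * g (x / (1-x)) := by
  have h := integral_image_eq_integral_abs_deriv_smul (f := phiJ13)
    (f' := fun x => ((1-x)^2)⁻¹) measurableSet_Ioo (fun x hx => phiJ13_deriv hx) phiJ13_inj g
  rw [phiJ13_image] at h
  rw [h]
  refine setIntegral_congr_fun measurableSet_Ioo fun x hx => ?_
  have hne : (0:ℝ) < 1 - x := by linarith [hx.2]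
  rw [abs_of_nonneg (by positivity), smul_eq_mul]
  rfl

open Set in
private lemma phiJ13_integrableOn (g : ℝ → ℝ) :
    IntegrableOn g (Set.Ioi (0:ℝ)) ↔
      IntegrableOn (fun x => ((1-x)^2)⁻¹ * g (x / (1-x))) (Set.Ioo (0:ℝ) 1) := by
  have h := integrableOn_image_iff_integrableOn_abs_deriv_smul (f := phiJ13)
    (f' := fun x => ((1-x)^2)⁻¹) measurableSet_Ioo (fun x hx => phiJ13_deriv hx) phiJ13_inj g
  rw [phiJ13_image] at h
  rw [h]
  constructor <;> intro h2 <;> refine h2.congr_fun (fun x hx => ?_) measurableSet_Ioo <;>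
    have hne : (0:ℝ) < 1 - x := by linarith [hx.2]
  · dsimp only; rw [abs_of_nonneg (by positivity : (0:ℝ) ≤ ((1-x)^2)⁻¹), smul_eq_mul]; rfl
  · dsimp only; rw [abs_of_nonneg (by positivity : (0:ℝ) ≤ ((1-x)^2)⁻¹), smul_eq_mul]; rfl

private lemma Beta_symm_J13 (a b : ℝ) : Beta a b = Beta b a := by
  unfold Beta; rw [add_comm]; ring

open Set in
private lemma pt_main_J13 {a b x : ℝ} (hx : x ∈ Set.Ioo (0:ℝ) 1) :
    ((1-x)^2)⁻¹ * ((x/(1-x)) ^ (a-1) * (1 + x/(1-x)) ^ (-(a+b)))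
      = x ^ (a-1) * (1-x) ^ (b-1) := by
  have hx0 := hx.1
  have hu : (0:ℝ) < 1 - x := by linarith [hx.2]
  have h1 : 1 + x/(1-x) = (1-x)⁻¹ := by field_simp; ring
  have h2 : (x/(1-x)) ^ (a-1) = x ^ (a-1) * (1-x) ^ (-(a-1)) := by
    rw [div_eq_mul_inv, Real.mul_rpow hx0.le (inv_nonneg.mpr hu.le), Real.inv_rpow hu.le,
      ← Real.rpow_neg hu.le]
  have h3 : ((1-x)⁻¹) ^ (-(a+b)) = (1-x) ^ (a+b) := by
    rw [Real.inv_rpow hu.le, Real.rpow_neg hu.le, inv_inv]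
  have e1 : ((1-x)^2)⁻¹ = (1-x) ^ (-2 : ℝ) := by
    rw [show ((1-x)^2 : ℝ) = (1-x) ^ ((2:ℕ):ℝ) from (Real.rpow_natCast _ 2).symm,
      ← Real.rpow_neg hu.le]
    norm_num
  rw [h1, h2, h3, e1]
  rw [show (1-x) ^ (-2:ℝ) * (x ^ (a-1) * (1-x) ^ (-(a-1)) * (1-x) ^ (a+b))
      = x ^ (a-1) * ((1-x) ^ (-2:ℝ) * (1-x) ^ (-(a-1)) * (1-x) ^ (a+b)) from by ring,
    ← Real.rpow_add hu, ← Real.rpow_add hu]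
  ring_nf

open Set in
private lemma int1_J13 {a b : ℝ} (ha : 0 < a) (hb : 0 < b) :
    IntegrableOn (fun x => x ^ (a-1) * Real.log x * (1-x) ^ (b-1)) (Set.Ioo (0:ℝ) 1) := by
  refine (betaLogIntegrableOn_J13 ha hb).mono' aesm_log_J13 ?_
  filter_upwards [ae_restrict_mem measurableSet_Ioo] with x hx
  have hx0 := hx.1
  have hu : (0:ℝ) < 1 - x := by linarith [hx.2]
  rw [Real.norm_eq_abs, abs_mul, abs_mul, abs_of_nonneg (Real.rpow_nonneg hx0.le _),
    abs_of_nonneg (Real.rpow_nonneg hu.le _)]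
  rw [show x ^ (a-1) * |Real.log x| * (1-x) ^ (b-1)
      = x ^ (a-1) * (1-x) ^ (b-1) * |Real.log x| from by ring]

open Set in
private lemma int2_J13 {a b : ℝ} (ha : 0 < a) (hb : 0 < b) :
    IntegrableOn (fun x => x ^ (a-1) * Real.log (1-x) * (1-x) ^ (b-1)) (Set.Ioo (0:ℝ) 1) := by
  have h := (reflect_integrableOn_J13 (fun y => y ^ (b-1) * Real.log y * (1-y) ^ (a-1))).mp
    (int1_J13 hb ha)
  refine h.congr_fun (fun x hx => ?_) measurableSet_Ioo
  show (1-x) ^ (b-1) * Real.log (1-x) * (1-(1-x)) ^ (a-1) = _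
  rw [show (1 : ℝ) - (1 - x) = x from by ring]
  ring

open Set in
private lemma L0_J13 {a b : ℝ} (ha : 0 < a) (hb : 0 < b) :
    ∫ z in Set.Ioi (0:ℝ), z ^ (a-1) * Real.log z * (1+z) ^ (-(a+b))
      = Beta a b * (digamma a - digamma b) := by
  rw [phiJ13_transfer]
  have hcong : ∀ x ∈ Set.Ioo (0:ℝ) 1,
      ((1-x)^2)⁻¹ * ((x/(1-x)) ^ (a-1) * Real.log (x/(1-x)) * (1+x/(1-x)) ^ (-(a+b)))
        = x ^ (a-1) * Real.log x * (1-x) ^ (b-1)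
          - x ^ (a-1) * Real.log (1-x) * (1-x) ^ (b-1) := by
    intro x hx
    have hx0 := hx.1
    have hu : (0:ℝ) < 1 - x := by linarith [hx.2]
    have hlog : Real.log (x/(1-x)) = Real.log x - Real.log (1-x) :=
      Real.log_div hx0.ne' hu.ne'
    have hmm := pt_main_J13 (a := a) (b := b) hx
    calc ((1-x)^2)⁻¹ * ((x/(1-x)) ^ (a-1) * Real.log (x/(1-x)) * (1+x/(1-x)) ^ (-(a+b)))
        = ((1-x)^2)⁻¹ * ((x/(1-x)) ^ (a-1) * (1+x/(1-x)) ^ (-(a+b)))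
            * (Real.log x - Real.log (1-x)) := by rw [hlog]; ring
      _ = x ^ (a-1) * (1-x) ^ (b-1) * (Real.log x - Real.log (1-x)) := by rw [hmm]
      _ = _ := by ring
  rw [setIntegral_congr_fun measurableSet_Ioo hcong,
    integral_sub (int1_J13 ha hb) (int2_J13 ha hb), I1_J13 ha hb]
  have hI2 : ∫ x in Set.Ioo (0:ℝ) 1, x ^ (a-1) * Real.log (1-x) * (1-x) ^ (b-1)
      = Beta b a * (digamma b - digamma (b+a)) := by
    rw [← I1_J13 hb ha, reflect_integral_J13 (fun y => y ^ (b-1) * Real.log y * (1-y) ^ (a-1))]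
    refine setIntegral_congr_fun measurableSet_Ioo fun x hx => ?_
    show _ = (1-x) ^ (b-1) * Real.log (1-x) * (1-(1-x)) ^ (a-1)
    rw [show (1 : ℝ) - (1 - x) = x from by ring]
    ring
  rw [hI2, Beta_symm_J13 b a, add_comm b a]
  ring

open Set in
private lemma B0_J13 {a b : ℝ} (ha : 0 < a) (hb : 0 < b) :
    ∫ z in Set.Ioi (0:ℝ), z ^ (a-1) * (1+z) ^ (-(a+b)) = Beta a b := by
  rw [phiJ13_transfer, ← betaReal_J13 ha hb]
  exact setIntegral_congr_fun measurableSet_Ioo fun x hx => pt_main_J13 hx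

open Set in
private lemma ibB_J13 {a b : ℝ} (ha : 0 < a) (hb : 0 < b) :
    IntegrableOn (fun z => z ^ (a-1) * (1+z) ^ (-(a+b))) (Set.Ioi (0:ℝ)) := by
  rw [phiJ13_integrableOn]
  exact (betaIntegrableOn_J13 ha hb).congr_fun
    (fun x hx => (pt_main_J13 hx).symm) measurableSet_Ioo

open Set in
private lemma ibL_J13 {a b : ℝ} (ha : 0 < a) (hb : 0 < b) :
    IntegrableOn (fun z => z ^ (a-1) * Real.log z * (1+z) ^ (-(a+b))) (Set.Ioi (0:ℝ)) := by
  rw [phiJ13_integrableOn]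
  have hsub : IntegrableOn ((fun x => x ^ (a-1) * Real.log x * (1-x) ^ (b-1))
      - (fun x => x ^ (a-1) * Real.log (1-x) * (1-x) ^ (b-1))) (Set.Ioo (0:ℝ) 1) :=
    (int1_J13 ha hb).sub (int2_J13 ha hb)
  refine hsub.congr_fun (fun x hx => ?_) measurableSet_Ioo
  have hx0 := hx.1
  have hu : (0:ℝ) < 1 - x := by linarith [hx.2]
  have hlog : Real.log (x/(1-x)) = Real.log x - Real.log (1-x) :=
    Real.log_div hx0.ne' hu.ne'
  calc x ^ (a-1) * Real.log x * (1-x) ^ (b-1) - x ^ (a-1) * Real.log (1-x) * (1-x) ^ (b-1)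
      = x ^ (a-1) * (1-x) ^ (b-1) * (Real.log x - Real.log (1-x)) := by ring
    _ = ((1-x)^2)⁻¹ * ((x/(1-x)) ^ (a-1) * (1+x/(1-x)) ^ (-(a+b)))
          * (Real.log x - Real.log (1-x)) := by rw [pt_main_J13 hx]
    _ = _ := by rw [hlog]; ring


/-- the key integral `J₁,₃` (with `n = 0`). -/
theorem J13_integral (a b c : ℝ) (ha : 0 < a) (hb : 0 < b) (hc : 0 < c) :
    ∫ z in Set.Ioi (0 : ℝ), z ^ (a - 1) * Real.log z / (1 + z / c) ^ (a + b) =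
      c ^ a * Beta b a * (digamma a - digamma b + Real.log c) := by
  have step1 : ∫ z in Set.Ioi (0 : ℝ), z ^ (a - 1) * Real.log z / (1 + z / c) ^ (a + b)
      = ∫ z in Set.Ioi (0 : ℝ), z ^ (a-1) * Real.log z * (1 + z/c) ^ (-(a+b)) := by
    refine setIntegral_congr_fun measurableSet_Ioi fun z hz => ?_
    have hz0 : (0:ℝ) < z := hz
    have h1 : (0:ℝ) < 1 + z/c := by positivity
    rw [Real.rpow_neg h1.le, div_eq_mul_inv]
  rw [step1]
  set g : ℝ → ℝ := fun z => z ^ (a-1) * Real.log z * (1 + z/c) ^ (-(a+b)) with hg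
  have hscale := MeasureTheory.integral_comp_mul_left_Ioi g 0 hc
  rw [mul_zero] at hscale
  have step2 : ∫ z in Set.Ioi (0:ℝ), g z
      = c * ∫ x in Set.Ioi (0:ℝ), g (c * x) := by
    rw [hscale, smul_eq_mul, ← mul_assoc, mul_inv_cancel₀ hc.ne', one_mul]
  have step3 : ∫ x in Set.Ioi (0:ℝ), g (c*x) = c ^ (a-1) * ∫ x in Set.Ioi (0:ℝ),
      (x ^ (a-1) * Real.log x * (1+x) ^ (-(a+b))
        + Real.log c * (x ^ (a-1) * (1+x) ^ (-(a+b)))) := by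
    rw [← integral_const_mul]
    refine setIntegral_congr_fun measurableSet_Ioi fun x hx => ?_
    have hx0 : (0:ℝ) < x := hx
    show (c*x) ^ (a-1) * Real.log (c*x) * (1 + (c*x)/c) ^ (-(a+b)) = _
    rw [mul_div_cancel_left₀ x hc.ne', Real.mul_rpow hc.le hx0.le,
      Real.log_mul hc.ne' hx0.ne']
    ring
  rw [step2, step3, integral_add (ibL_J13 ha hb) ((ibB_J13 ha hb).const_mul _),
    integral_const_mul, L0_J13 ha hb, B0_J13 ha hb, Beta_symm_J13 b a]
  have hca : c * c ^ (a-1) = c ^ a := by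
    rw [Real.rpow_sub hc, Real.rpow_one]; field_simp
  rw [← hca]
  ring
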